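/- Let p be a prime, let 𝓛_1, …, 𝓛_k be systems of linear forms over F_p, and let f : F_p^n → (0,1) be such that the functions f^{∂𝓛_1}, …, f^{∂𝓛_k} : F_p^n → ℝ are linearly independent over ℝ. Then there exists ε > 0 such that {(t_{𝓛_1}(f), …, t_{𝓛_k}(f)) + z : z ∈ ℝ^k, ‖z‖_∞ ≤ ε} ⊆ {(t_{𝓛_1}(g), …, t_{𝓛_k}(g)) : g : F_p^n → (0,1)}. -/

import Mathlib

open Filter Topology

noncomputable section

namespace Paper

/-- The average (expectation) of a complex-valued function over a finite type. -/
def expC {α : Type*} [Fintype α] (f : α → ℂ) : ℂ := (∑ x, f x) / (Fintype.card α : ℂ)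

/-- The average (expectation) of a real-valued function over a finite type. -/
def expR {α : Type*} [Fintype α] (f : α → ℝ) : ℝ := (∑ x, f x) / (Fintype.card α : ℝ)

variable (p : ℕ) [NeZero p]

/-- `e_p(m) = exp(2 π i m / p)`. -/
def ep (m : ZMod p) : ℂ :=
  Complex.exp (2 * (Real.pi : ℂ) * Complex.I * (m.val : ℂ) / (p : ℂ))

/-- The Gowers uniformity norm `‖f‖_{U^k}` of `f : F_p^n → ℂ`. -/
def gowersNorm (n k : ℕ) (f : (Fin n → ZMod p) → ℂ) : ℝ :=
  (norm (expC (fun xy : (Fin n → ZMod p) × (Fin k → Fin n → ZMod p) =>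
      ∏ S : Finset (Fin k),
        (fun z => (starRingEnd ℂ) z)^[k - S.card] (f (xy.1 + ∑ i ∈ S, xy.2 i))))) ^
    (((2 : ℝ) ^ k)⁻¹)

/-- Inner product `⟨f, g⟩ = 𝔼[f ⬝ conj g]`. -/
def inn (n : ℕ) (f g : (Fin n → ZMod p) → ℂ) : ℂ :=
  expC (fun x => f x * (starRingEnd ℂ) (g x))

/-- Correlation norm `‖f‖_{u(D)}` for a set `D` of complex-valued functions. -/
def uNormC (n : ℕ) (D : Set ((Fin n → ZMod p) → ℂ)) (f : (Fin n → ZMod p) → ℂ) : ℝ :=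
  ⨆ g ∈ D, norm (inn p n f g)

/-- Correlation norm `‖f‖_{u(D)}` for a set `D` of `F_p`-valued functions. -/
def uNormF (n : ℕ) (D : Set ((Fin n → ZMod p) → ZMod p)) (f : (Fin n → ZMod p) → ℂ) : ℝ :=
  ⨆ g ∈ D, norm (inn p n f (fun x => ep p (g x)))

/-- The bias of `f : F_p^n → F_p`. -/
def biasF (n : ℕ) (f : (Fin n → ZMod p) → ZMod p) : ℝ :=
  norm (expC (fun x => ep p (f x)))

/-- Evaluation of a linear form `L ∈ F_p^k` at `X ∈ (F_p^n)^k`. -/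
def applyLF (n k : ℕ) (L : Fin k → ZMod p) (X : Fin k → Fin n → ZMod p) :
    Fin n → ZMod p := ∑ i, L i • X i

/-- `t_𝓛(f)` for a system of linear forms given as a tuple `L`. -/
def tL (n k m : ℕ) (L : Fin m → Fin k → ZMod p) (f : (Fin n → ZMod p) → ℂ) : ℂ :=
  expC (fun X : Fin k → Fin n → ZMod p => ∏ i, f (applyLF p n k (L i) X))

/-- `t_𝓛(f)` for a real-valued function. -/
def tLR (n k m : ℕ) (L : Fin m → Fin k → ZMod p) (f : (Fin n → ZMod p) → ℝ) : ℝ :=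
  expR (fun X : Fin k → Fin n → ZMod p => ∏ i, f (applyLF p n k (L i) X))

/-- `t_{𝓛,α}(f)`, the average with conjugations `α`. -/
def tLA (n k m : ℕ) (L : Fin m → Fin k → ZMod p) (α : Fin m → Bool)
    (f : (Fin n → ZMod p) → ℂ) : ℂ :=
  expC (fun X : Fin k → Fin n → ZMod p =>
    ∏ i, if α i then (starRingEnd ℂ) (f (applyLF p n k (L i) X))
      else f (applyLF p n k (L i) X))

/-- `t*_{𝓛,β}(f)`, the average with coefficients `β ∈ F_p^m`. -/
def tLstar (n k m : ℕ) (L : Fin m → Fin k → ZMod p) (β : Fin m → ZMod p)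
    (f : (Fin n → ZMod p) → ZMod p) : ℂ :=
  expC (fun X : Fin k → Fin n → ZMod p => ep p (∑ i, β i * f (applyLF p n k (L i) X)))

/-- A system of linear forms is homogeneous if, for uniform `X`, the joint distribution of
`(L₁(X),…,L_m(X))` is invariant under simultaneous translation by any constant `c`. -/
def IsHomogeneous (k m : ℕ) (L : Fin m → Fin k → ZMod p) : Prop :=
  ∀ (n : ℕ) (c : Fin n → ZMod p) (y : Fin m → Fin n → ZMod p),
    {X : Fin k → Fin n → ZMod p | ∀ i, applyLF p n k (L i) X = y i}.ncard =
    {X : Fin k → Fin n → ZMod p | ∀ i, applyLF p n k (L i) X + c = y i}.ncard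

/-- Cauchy–Schwarz complexity at most `s`. -/
def CSComplexityLE (k m : ℕ) (L : Fin m → Fin k → ZMod p) (s : ℕ) : Prop :=
  ∀ i : Fin m, ∃ φ : Fin m → Fin (s + 1), ∀ c : Fin (s + 1),
    L i ∉ Submodule.span (ZMod p) (L '' {j | j ≠ i ∧ φ j = c})

/-- True complexity at most `d`. -/
def TrueComplexityLE (k m : ℕ) (L : Fin m → Fin k → ZMod p) (d : ℕ) : Prop :=
  ∀ ε : ℝ, 0 < ε → ∃ δ : ℝ, 0 < δ ∧ ∀ (n : ℕ) (f : (Fin n → ZMod p) → ℂ),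
    (∀ x, norm (f x) ≤ 1) → gowersNorm p n (d + 1) f ≤ δ →
      norm (tL p n k m L f) ≤ ε

/-- True complexity exactly `d`. -/
def TrueComplexityEq (k m : ℕ) (L : Fin m → Fin k → ZMod p) (d : ℕ) : Prop :=
  TrueComplexityLE p k m L d ∧ ∀ e, e < d → ¬ TrueComplexityLE p k m L e

/-- Iterated additive derivative of `P : F_p^n → F_p` in a list of directions. -/
def derivList (n : ℕ) :
    List (Fin n → ZMod p) → ((Fin n → ZMod p) → ZMod p) → ((Fin n → ZMod p) → ZMod p)
  | [], P => P
  | y :: ys, P => derivList n ys (fun x => P (x + y) - P x)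

/-- `P` is a polynomial of degree at most `d`: all `(d+1)`-fold derivatives vanish. -/
def DegLE (n : ℕ) (P : (Fin n → ZMod p) → ZMod p) (d : ℕ) : Prop :=
  ∀ ys : List (Fin n → ZMod p), ys.length = d + 1 → derivList p n ys P = 0

/-- `P` is a polynomial of degree exactly `d`. -/
def DegEq (n : ℕ) (P : (Fin n → ZMod p) → ZMod p) (d : ℕ) : Prop :=
  DegLE p n P d ∧ ∀ e, e < d → ¬ DegLE p n P e

/-- `rank(P) > r`: `P` cannot be written as a function of `r` polynomials of degree
at most `deg(P) − 1`. -/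
def RankGT (n : ℕ) (P : (Fin n → ZMod p) → ZMod p) (r : ℕ) : Prop :=
  ∀ d : ℕ, DegEq p n P d →
    ¬ ∃ (Q : Fin r → (Fin n → ZMod p) → ZMod p) (Γ : (Fin r → ZMod p) → ZMod p),
      (∀ i, DegLE p n (Q i) (d - 1)) ∧ ∀ x, P x = Γ (fun i => Q i x)

/-- `rank(P) ≥ r`. -/
def RankGE (n : ℕ) (P : (Fin n → ZMod p) → ZMod p) (r : ℕ) : Prop :=
  ∀ r' : ℕ, r' < r → RankGT p n P r'

/-- Extension of a function on `F_p^n` to `F_p^m` (`m ≥ n`) by ignoring the extra coordinates. -/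
def extendFun {β : Type*} {n m : ℕ} (h : n ≤ m) (g : (Fin n → ZMod p) → β) :
    (Fin m → ZMod p) → β := fun x => g (fun i => x (Fin.castLE h i))

/-- (A1) Consistency for `F_p`-valued families. -/
def ConsistentF (D : ∀ n : ℕ, Set ((Fin n → ZMod p) → ZMod p)) : Prop :=
  ∀ (n m : ℕ) (h : n ≤ m), ∀ g ∈ D n, extendFun p h g ∈ D m

/-- Consistency for unit-disc-valued families: `D_n ⊆ D_{n+1}`. -/
def ConsistentC (D : ∀ n : ℕ, Set ((Fin n → ZMod p) → ℂ)) : Prop :=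
  ∀ n : ℕ, ∀ g ∈ D n, extendFun p (Nat.le_succ n) g ∈ D (n + 1)

/-- (A2) Affine invariance. -/
def AffineInvariant (D : ∀ n : ℕ, Set ((Fin n → ZMod p) → ZMod p)) : Prop :=
  ∀ n : ℕ, ∀ g ∈ D n,
    ∀ (T : (Fin n → ZMod p) ≃ₗ[ZMod p] (Fin n → ZMod p)) (c : Fin n → ZMod p),
      (fun x => g (T x + c)) ∈ D n

/-- (A3) Sparsity: `|D_n| ≤ p^{ε p^n}` for every `ε > 0` and all large enough `n`. -/
def Sparse (D : ∀ n : ℕ, Set ((Fin n → ZMod p) → ZMod p)) : Prop :=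
  ∀ ε : ℝ, 0 < ε → ∃ n₀ : ℕ, ∀ n, n₀ ≤ n →
    (Nat.card (D n) : ℝ) ≤ (p : ℝ) ^ (ε * (p : ℝ) ^ n)

/-- A proper dual family: consistent, affine invariant and sparse. -/
def ProperDual (D : ∀ n : ℕ, Set ((Fin n → ZMod p) → ZMod p)) : Prop :=
  ConsistentF p D ∧ AffineInvariant p D ∧ Sparse p D

/-- The family `D` is correlation testable with `q` queries. -/
def CorrTestable (q : ℕ) (D : ∀ n : ℕ, Set ((Fin n → ZMod p) → ZMod p)) : Prop :=
  ∃ (Γ : (Fin q → ZMod p) → Bool) (μ : ∀ n : ℕ, (Fin q → Fin n → ZMod p) → ℝ),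
    (∀ n x, 0 ≤ μ n x) ∧ (∀ n, ∑ x, μ n x = 1) ∧
    ∀ ε : ℝ, 0 < ε → ∃ (δ θm θp : ℝ) (n₀ : ℕ),
      0 < δ ∧ δ < ε ∧ 0 ≤ θm ∧ θm < θp ∧ θp ≤ 1 ∧
      ∀ n, n₀ < n → ∀ f : (Fin n → ZMod p) → ZMod p,
        (ε ≤ uNormF p n (D n) (fun x => ep p (f x)) →
          θp ≤ ∑ x, μ n x * (if Γ (fun i => f (x i)) = true then 1 else 0)) ∧
        (uNormF p n (D n) (fun x => ep p (f x)) ≤ δ →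
          (∑ x, μ n x * (if Γ (fun i => f (x i)) = true then 1 else 0)) ≤ θm)

/-- Strong correlation testability by linear systems with true complexity `d` and
Cauchy–Schwarz complexity `s`. -/
def StronglyCorrTestable (D : ∀ n : ℕ, Set ((Fin n → ZMod p) → ℂ))
    (d s : ℕ) : Prop :=
  ∀ ε : ℝ, 0 < ε → ∃ (δ : ℝ) (n₀ ℓ : ℕ) (kk mm : Fin ℓ → ℕ)
      (L : ∀ i, Fin (mm i) → Fin (kk i) → ZMod p) (α : ∀ i, Fin (mm i) → Bool),
    0 < δ ∧ δ < ε ∧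
    (∀ i, Function.Injective (L i)) ∧
    (∀ i, IsHomogeneous p (kk i) (mm i) (L i)) ∧
    (∀ i, TrueComplexityLE p (kk i) (mm i) (L i) d) ∧
    (∀ i, CSComplexityLE p (kk i) (mm i) (L i) s) ∧
    Disjoint
      (closure {v : Fin ℓ → ℂ | ∃ (n : ℕ) (f : (Fin n → ZMod p) → ℂ),
        n₀ ≤ n ∧ (∀ x, norm (f x) ≤ 1) ∧ ε ≤ uNormC p n (D n) f ∧
        v = fun i => tLA p n (kk i) (mm i) (L i) (α i) f})
      (closure {v : Fin ℓ → ℂ | ∃ (n : ℕ) (f : (Fin n → ZMod p) → ℂ),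
        n₀ ≤ n ∧ (∀ x, norm (f x) ≤ 1) ∧ uNormC p n (D n) f ≤ δ ∧
        v = fun i => tLA p n (kk i) (mm i) (L i) (α i) f})

/-- `k ∈ S(D)`: there are polynomials of degree exactly `k` and arbitrarily high rank
with noticeable correlation with `D`. -/
def memS (D : ∀ n : ℕ, Set ((Fin n → ZMod p) → ℂ)) (k : ℕ) : Prop :=
  1 ≤ k ∧ ∀ r : ℕ → ℕ, Monotone r → ∃ n₀ a : ℕ, ∀ n, n₀ ≤ n →
    ∃ P : (Fin n → ZMod p) → ZMod p, DegEq p n P k ∧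
      (1 : ℝ) / (a : ℝ) ≤ uNormC p n (D n) (fun x => ep p (P x)) ∧
      RankGT p n P (r a)

/-- `Γ x` is a probability distribution on `F_p` for every `x`. -/
def IsDist (n : ℕ) (Γ : (Fin n → ZMod p) → ZMod p → ℝ) : Prop :=
  (∀ x c, 0 ≤ Γ x c) ∧ ∀ x, ∑ c, Γ x c = 1

/-- `a_c(μ) = E_{z ∼ μ}[e_p(c z)]`. -/
def aC (c : ZMod p) (μ : ZMod p → ℝ) : ℂ :=
  ∑ z : ZMod p, (μ z : ℂ) * ep p (c * z)

/-- `t*_{𝓛,β}(Γ)` for a distributional function `Γ`. -/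
def tLstarDist (n k m : ℕ) (L : Fin m → Fin k → ZMod p) (β : Fin m → ZMod p)
    (Γ : (Fin n → ZMod p) → ZMod p → ℝ) : ℂ :=
  expC (fun X : Fin k → Fin n → ZMod p => ∏ i, aC p (β i) (Γ (applyLF p n k (L i) X)))

/-- The probability of sampling the function `F` from the distributional function `Γ`
(independently at each point). -/
def probFun (n : ℕ) (Γ : (Fin n → ZMod p) → ZMod p → ℝ)
    (F : (Fin n → ZMod p) → ZMod p) : ℝ :=
  ∏ x, Γ x (F x)

/-- Conditional expectation of a distributional function w.r.t. the polynomial factor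
defined by `P₁, …, P_C`. -/
def condExpDist (n C : ℕ) (P : Fin C → (Fin n → ZMod p) → ZMod p)
    (Γ : (Fin n → ZMod p) → ZMod p → ℝ) : (Fin n → ZMod p) → ZMod p → ℝ :=
  fun x c =>
    (∑ y ∈ Finset.univ.filter (fun y : Fin n → ZMod p => ∀ j, P j y = P j x), Γ y c) /
    ((Finset.univ.filter (fun y : Fin n → ZMod p => ∀ j, P j y = P j x)).card : ℝ)

/-- Connectivity of a system of linear forms given as a tuple. -/
def ConnectedSystem (k m : ℕ) (L : Fin m → Fin k → ZMod p) : Prop :=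
  ∀ S : Finset (Fin m), S.Nonempty → S ≠ Finset.univ →
    Submodule.span (ZMod p) (L '' ↑S) ⊓ Submodule.span (ZMod p) (L '' ↑(Sᶜ)) ≠ ⊥

/-- Isomorphism of two systems of linear forms (given as injective tuples):
a bijection preserving all linear relations, i.e. extending to an invertible linear map
between the spans. -/
def SystemsIso {k₁ m₁ k₂ m₂ : ℕ}
    (L₁ : Fin m₁ → Fin k₁ → ZMod p) (L₂ : Fin m₂ → Fin k₂ → ZMod p) : Prop :=
  ∃ σ : Fin m₁ ≃ Fin m₂, ∀ c : Fin m₁ → ZMod p,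
    (∑ i, c i • L₁ i) = 0 ↔ (∑ i, c i • L₂ (σ i)) = 0

/-- Connectivity of a system of linear forms given as a finite set. -/
def ConnectedFinset {k : ℕ} (𝓛 : Finset (Fin k → ZMod p)) : Prop :=
  ∀ S : Finset (Fin k → ZMod p), S ⊆ 𝓛 → S.Nonempty → S ≠ 𝓛 →
    Submodule.span (ZMod p) (S : Set (Fin k → ZMod p)) ⊓
      Submodule.span (ZMod p) ((𝓛 \ S : Finset (Fin k → ZMod p)) : Set (Fin k → ZMod p)) ≠ ⊥

/-- Isomorphism of two systems of linear forms given as finite sets. -/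
def FinsetIso {k₁ k₂ : ℕ}
    (A : Finset (Fin k₁ → ZMod p)) (B : Finset (Fin k₂ → ZMod p)) : Prop :=
  ∃ e : {x // x ∈ A} ≃ {x // x ∈ B}, ∀ c : {x // x ∈ A} → ZMod p,
    (∑ x : {x // x ∈ A}, c x • (x : Fin k₁ → ZMod p)) = 0 ↔
    (∑ x : {x // x ∈ A}, c x • ((e x : Fin k₂ → ZMod p))) = 0

/-- Isomorphism of two 1-flagged systems of linear forms: a relation-preserving bijection
whose linear extension carries one flag to the other. -/
def FlaggedIso {k₁ k₂ : ℕ}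
    (A : Finset (Fin k₁ → ZMod p)) (M₁ : Fin k₁ → ZMod p)
    (B : Finset (Fin k₂ → ZMod p)) (M₂ : Fin k₂ → ZMod p) : Prop :=
  ∃ e : {x // x ∈ A} ≃ {x // x ∈ B},
    (∀ c : {x // x ∈ A} → ZMod p,
      (∑ x : {x // x ∈ A}, c x • (x : Fin k₁ → ZMod p)) = 0 ↔
      (∑ x : {x // x ∈ A}, c x • ((e x : Fin k₂ → ZMod p))) = 0) ∧
    (∀ c : {x // x ∈ A} → ZMod p,
      (∑ x : {x // x ∈ A}, c x • (x : Fin k₁ → ZMod p)) = M₁ →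
      (∑ x : {x // x ∈ A}, c x • ((e x : Fin k₂ → ZMod p))) = M₂)

/-- The underlying (unflagged) system of the product of two 1-flagged systems,
relative to the chosen surjection `T`. -/
def productSystem {k₀ k₁ : ℕ}
    (𝓛₀ : Finset (Fin k₀ → ZMod p)) (𝓛₁ : Finset (Fin k₁ → ZMod p))
    (T : (Fin (k₀ + k₁) → ZMod p) →ₗ[ZMod p] (Fin (k₀ + k₁ - 1) → ZMod p)) :
    Finset (Fin (k₀ + k₁ - 1) → ZMod p) :=
  (𝓛₀.image (fun L => Fin.append L (0 : Fin k₁ → ZMod p)) ∪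
    𝓛₁.image (fun L => Fin.append (0 : Fin k₀ → ZMod p) L)).image (fun v => T v)

/-- `f^{(𝓛∖{Lᵢ})^{Lᵢ}}(x)`: conditional average of `∏_{j ≠ i} f(L_j(X))` given `Lᵢ(X) = x`. -/
def flagCondAvg (n k m : ℕ) (L : Fin m → Fin k → ZMod p) (i : Fin m)
    (f : (Fin n → ZMod p) → ℂ) (x : Fin n → ZMod p) : ℂ :=
  (∑ X ∈ Finset.univ.filter (fun X : Fin k → Fin n → ZMod p => applyLF p n k (L i) X = x),
      ∏ j ∈ Finset.univ.erase i, f (applyLF p n k (L j) X)) /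
  (((Finset.univ.filter
      (fun X : Fin k → Fin n → ZMod p => applyLF p n k (L i) X = x)).card : ℂ))

/-- `f^{∂𝓛}(x) = Σ_{L ∈ 𝓛} f^{(𝓛∖{L})^L}(x)`. -/
def partialL (n k m : ℕ) (L : Fin m → Fin k → ZMod p)
    (f : (Fin n → ZMod p) → ℂ) (x : Fin n → ZMod p) : ℂ :=
  ∑ i, flagCondAvg p n k m L i f x

/-- Real-valued version of `flagCondAvg`. -/
def flagCondAvgR (n k m : ℕ) (L : Fin m → Fin k → ZMod p) (i : Fin m)
    (f : (Fin n → ZMod p) → ℝ) (x : Fin n → ZMod p) : ℝ :=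
  (∑ X ∈ Finset.univ.filter (fun X : Fin k → Fin n → ZMod p => applyLF p n k (L i) X = x),
      ∏ j ∈ Finset.univ.erase i, f (applyLF p n k (L j) X)) /
  (((Finset.univ.filter
      (fun X : Fin k → Fin n → ZMod p => applyLF p n k (L i) X = x)).card : ℝ))

/-- Real-valued version of `partialL`. -/
def partialLR (n k m : ℕ) (L : Fin m → Fin k → ZMod p)
    (f : (Fin n → ZMod p) → ℝ) (x : Fin n → ZMod p) : ℝ :=
  ∑ i, flagCondAvgR p n k m L i f x

/-- `t_𝓛` viewed as a formal polynomial in the variables `{f(x) : x ∈ F_p^n}`. -/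
def tLPoly (n k m : ℕ) (L : Fin m → Fin k → ZMod p) :
    MvPolynomial (Fin n → ZMod p) ℂ :=
  MvPolynomial.C (((p : ℂ) ^ (n * k))⁻¹) *
    ∑ X : Fin k → Fin n → ZMod p, ∏ i, MvPolynomial.X (applyLF p n k (L i) X)

section Statement19Aux

variable {p : ℕ} [NeZero p]

lemma applyLF_add' {n k : ℕ} (L : Fin k → ZMod p) (X Y : Fin k → Fin n → ZMod p) :
    applyLF p n k L (X + Y) = applyLF p n k L X + applyLF p n k L Y := by
  simp only [applyLF, Pi.add_apply, smul_add, Finset.sum_add_distrib]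

lemma applyLF_sub' {n k : ℕ} (L : Fin k → ZMod p) (X Y : Fin k → Fin n → ZMod p) :
    applyLF p n k L (X - Y) = applyLF p n k L X - applyLF p n k L Y := by
  simp only [applyLF, Pi.sub_apply, smul_sub, Finset.sum_sub_distrib]

lemma applyLF_surj' {n k : ℕ} (hp : p.Prime) (L : Fin k → ZMod p) (hL : L ≠ 0)
    (y : Fin n → ZMod p) : ∃ X, applyLF p n k L X = y := by
  haveI := Fact.mk hp
  obtain ⟨i₀, hi₀⟩ := Function.ne_iff.mp hL
  simp only [Pi.zero_apply] at hi₀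
  refine ⟨fun i => if i = i₀ then (L i₀)⁻¹ • y else 0, ?_⟩
  rw [applyLF, Finset.sum_eq_single i₀]
  · simp [smul_smul, mul_inv_cancel₀ hi₀]
  · intro b _ hb; simp [hb]
  · simp

lemma fiber_card_const {n k : ℕ} (hp : p.Prime) (L : Fin k → ZMod p) (hL : L ≠ 0)
    (x y : Fin n → ZMod p) :
    (Finset.univ.filter fun X : Fin k → Fin n → ZMod p => applyLF p n k L X = x).card =
    (Finset.univ.filter fun X : Fin k → Fin n → ZMod p => applyLF p n k L X = y).card := by
  classical
  obtain ⟨X₀, hX₀⟩ := applyLF_surj' hp L hL x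
  obtain ⟨Y₀, hY₀⟩ := applyLF_surj' hp L hL y
  apply Finset.card_bij' (fun X _ => X + (Y₀ - X₀)) (fun X _ => X + (X₀ - Y₀))
  · intro a ha
    simp only [Finset.mem_filter, Finset.mem_univ, true_and] at ha ⊢
    rw [applyLF_add', applyLF_sub', ha, hX₀, hY₀]; abel
  · intro a ha
    simp only [Finset.mem_filter, Finset.mem_univ, true_and] at ha ⊢
    rw [applyLF_add', applyLF_sub', ha, hX₀, hY₀]; abel
  · intro a _; abel
  · intro a _; abel

lemma fiber_card_mul {n k : ℕ} (hp : p.Prime) (L : Fin k → ZMod p) (hL : L ≠ 0)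
    (x : Fin n → ZMod p) :
    (Finset.univ.filter fun X : Fin k → Fin n → ZMod p => applyLF p n k L X = x).card *
      Fintype.card (Fin n → ZMod p) = Fintype.card (Fin k → Fin n → ZMod p) := by
  classical
  have h := Finset.card_eq_sum_card_fiberwise
    (s := (Finset.univ : Finset (Fin k → Fin n → ZMod p)))
    (t := (Finset.univ : Finset (Fin n → ZMod p))) (f := applyLF p n k L)
    (fun a _ => Finset.mem_univ _)
  rw [Finset.card_univ] at h
  rw [h, Finset.sum_congr rfl (fun y _ => fiber_card_const hp L hL y x)]
  simp [Finset.sum_const, Finset.card_univ, mul_comm]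

lemma key_identity {n k m : ℕ} (hp : p.Prime) (L : Fin m → Fin k → ZMod p)
    (hnz : ∀ j, L j ≠ 0) (f h : (Fin n → ZMod p) → ℝ) :
    (Fintype.card (Fin k → Fin n → ZMod p) : ℝ)⁻¹ *
      ∑ X : Fin k → Fin n → ZMod p, ∑ j : Fin m,
        (∏ j' ∈ Finset.univ.erase j, f (applyLF p n k (L j') X)) * h (applyLF p n k (L j) X)
    = expR (fun x => h x * partialLR p n k m L f x) := by
  classical
  have hKpos : (0 : ℝ) < (Fintype.card (Fin k → Fin n → ZMod p) : ℝ) := by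
    exact_mod_cast Fintype.card_pos
  have hNpos : (0 : ℝ) < (Fintype.card (Fin n → ZMod p) : ℝ) := by
    exact_mod_cast Fintype.card_pos
  set K := (Fintype.card (Fin k → Fin n → ZMod p) : ℝ) with hK
  set N := (Fintype.card (Fin n → ZMod p) : ℝ) with hN
  rw [expR]
  have hswap1 : (∑ X : Fin k → Fin n → ZMod p, ∑ j : Fin m,
        (∏ j' ∈ Finset.univ.erase j, f (applyLF p n k (L j') X)) * h (applyLF p n k (L j) X))
      = ∑ j : Fin m, ∑ X : Fin k → Fin n → ZMod p,
        (∏ j' ∈ Finset.univ.erase j, f (applyLF p n k (L j') X)) * h (applyLF p n k (L j) X) :=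
    Finset.sum_comm
  have hswap2 : (∑ x : Fin n → ZMod p, h x * partialLR p n k m L f x)
      = ∑ j : Fin m, ∑ x : Fin n → ZMod p, h x * flagCondAvgR p n k m L j f x := by
    simp only [partialLR, Finset.mul_sum]
    exact Finset.sum_comm
  rw [hswap1, hswap2, Finset.mul_sum, Finset.sum_div]
  refine Finset.sum_congr rfl fun j _ => ?_
  have hc : ∀ x : Fin n → ZMod p,
      ((Finset.univ.filter fun X : Fin k → Fin n → ZMod p =>
        applyLF p n k (L j) X = x).card : ℝ) * N = K := fun x => by
    rw [hK, hN]
    exact_mod_cast fiber_card_mul hp (L j) (hnz j) x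
  have hstep : ∀ x : Fin n → ZMod p, h x * flagCondAvgR p n k m L j f x
      = N / K * ∑ X ∈ Finset.univ.filter
          (fun X : Fin k → Fin n → ZMod p => applyLF p n k (L j) X = x),
        (∏ j' ∈ Finset.univ.erase j, f (applyLF p n k (L j') X)) *
          h (applyLF p n k (L j) X) := by
    intro x
    have hcx := hc x
    have hc0 : ((Finset.univ.filter fun X : Fin k → Fin n → ZMod p =>
        applyLF p n k (L j) X = x).card : ℝ) ≠ 0 := by
      intro h0
      rw [h0, zero_mul] at hcx
      exact (ne_of_gt hKpos) hcx.symm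
    have hrw : ∑ X ∈ Finset.univ.filter
          (fun X : Fin k → Fin n → ZMod p => applyLF p n k (L j) X = x),
        (∏ j' ∈ Finset.univ.erase j, f (applyLF p n k (L j') X)) *
          h (applyLF p n k (L j) X)
        = (∑ X ∈ Finset.univ.filter
            (fun X : Fin k → Fin n → ZMod p => applyLF p n k (L j) X = x),
          ∏ j' ∈ Finset.univ.erase j, f (applyLF p n k (L j') X)) * h x := by
      rw [Finset.sum_mul]
      refine Finset.sum_congr rfl fun X hX => ?_
      rw [(Finset.mem_filter.mp hX).2]
    rw [hrw, flagCondAvgR]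
    field_simp
    linear_combination (-(h x * (∑ X ∈ Finset.univ.filter
        (fun X : Fin k → Fin n → ZMod p => applyLF p n k (L j) X = x),
      ∏ j' ∈ Finset.univ.erase j, f (applyLF p n k (L j') X)))) * hcx
  rw [Finset.sum_congr rfl fun x _ => hstep x, ← Finset.mul_sum]
  have hfib : ∑ x : Fin n → ZMod p,
      ∑ X ∈ Finset.univ.filter (fun X : Fin k → Fin n → ZMod p => applyLF p n k (L j) X = x),
        (∏ j' ∈ Finset.univ.erase j, f (applyLF p n k (L j') X)) * h (applyLF p n k (L j) X)
      = ∑ X : Fin k → Fin n → ZMod p,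
        (∏ j' ∈ Finset.univ.erase j, f (applyLF p n k (L j') X)) *
          h (applyLF p n k (L j) X) :=
    Finset.sum_fiberwise_of_maps_to (fun X _ => Finset.mem_univ _) _
  rw [hfib, inv_mul_eq_div, div_mul_eq_mul_div, div_div, mul_comm K N,
    mul_div_mul_left _ _ (ne_of_gt hNpos)]

theorem statement19_surj_aux {n ℓ : ℕ} (v : Fin ℓ → (Fin n → ZMod p) → ℝ)
    (hind : LinearIndependent ℝ v) (y : Fin ℓ → ℝ) :
    ∃ h : (Fin n → ZMod p) → ℝ, ∀ i, expR (fun x => h x * v i x) = y i := by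
  classical
  let T : ((Fin n → ZMod p) → ℝ) →ₗ[ℝ] (Fin ℓ → ℝ) :=
    { toFun := fun h i => expR (fun x => h x * v i x)
      map_add' := by
        intro a b; funext i
        simp only [expR, Pi.add_apply, add_mul, Finset.sum_add_distrib, add_div]
      map_smul' := by
        intro c a; funext i
        simp only [expR, Pi.smul_apply, smul_eq_mul, RingHom.id_apply, mul_assoc,
          ← Finset.mul_sum, mul_div_assoc] }
  let S : (Fin ℓ → ℝ) →ₗ[ℝ] ((Fin n → ZMod p) → ℝ) :=
    { toFun := fun c x => ∑ i, c i * v i x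
      map_add' := by
        intro a b; funext x
        simp only [Pi.add_apply, add_mul, Finset.sum_add_distrib]
      map_smul' := by
        intro c a; funext x
        simp only [Pi.smul_apply, smul_eq_mul, RingHom.id_apply, mul_assoc, ← Finset.mul_sum] }
  have hinj : Function.Injective (T ∘ₗ S) := by
    rw [← LinearMap.ker_eq_bot, LinearMap.ker_eq_bot']
    intro c hc
    have h0 : ∑ i, c i * (T (S c)) i = 0 := by
      rw [show T (S c) = 0 from hc]; simp
    have hTS : ∀ i, (T (S c)) i = expR (fun x => (S c) x * v i x) := fun i => rfl
    have hexp : ∑ i, c i * (T (S c)) i = expR (fun x => (S c) x * (S c) x) := by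
      have h1 : ∀ i, c i * (T (S c)) i
          = (∑ x : Fin n → ZMod p, c i * ((S c) x * v i x)) /
            (Fintype.card (Fin n → ZMod p) : ℝ) := by
        intro i
        rw [hTS i, expR, ← Finset.mul_sum, mul_div_assoc]
      rw [Finset.sum_congr rfl fun i _ => h1 i, ← Finset.sum_div, expR]
      congr 1
      have hsw : (∑ i : Fin ℓ, ∑ x : Fin n → ZMod p, c i * ((S c) x * v i x))
          = ∑ x : Fin n → ZMod p, ∑ i : Fin ℓ, c i * ((S c) x * v i x) := Finset.sum_comm
      rw [hsw]
      refine Finset.sum_congr rfl fun x _ => ?_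
      have hS : (S c) x = ∑ i, c i * v i x := rfl
      calc ∑ i, c i * ((S c) x * v i x)
          = (S c) x * ∑ i, c i * v i x := by
            rw [Finset.mul_sum]
            exact Finset.sum_congr rfl fun i _ => by ring
        _ = (S c) x * (S c) x := by rw [← hS]
    have hzero : (S c) = 0 := by
      have hsum0 : ∑ x : Fin n → ZMod p, (S c) x * (S c) x = 0 := by
        have := hexp.symm.trans h0
        rw [expR, div_eq_zero_iff] at this
        rcases this with h' | h'
        · exact h'
        · exact absurd h' (by exact_mod_cast Fintype.card_ne_zero)
      funext x
      have := (Finset.sum_eq_zero_iff_of_nonneg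
        (fun x _ => mul_self_nonneg ((S c) x))).mp hsum0 x (Finset.mem_univ x)
      exact (mul_self_eq_zero).mp this
    have : ∀ i, c i = 0 := by
      have hlin := Fintype.linearIndependent_iff.mp hind c ?_
      · exact hlin
      · funext x
        have := congrFun hzero x
        simpa [S, Finset.sum_apply] using this
    funext i; exact this i
  have hsurj : Function.Surjective (T ∘ₗ S) :=
    (LinearMap.injective_iff_surjective).mp hinj
  obtain ⟨c, hc⟩ := hsurj y
  exact ⟨S c, fun i => congrFun hc i⟩

end Statement19Aux

/-- Claim: linear independence of the `f^{∂𝓛_i}` gives a full-dimensional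
neighbourhood of the profile. Let `𝓛_1, …, 𝓛_ℓ` be systems of (nonzero) linear forms and
`f : F_p^n → (0,1)` be such that `f^{∂𝓛_1}, …, f^{∂𝓛_ℓ}` are linearly independent over `ℝ`.
Then there is `ε > 0` such that every point within `L^∞`-distance `ε` of
`(t_{𝓛_1}(f), …, t_{𝓛_ℓ}(f))` is the profile of some `g : F_p^n → (0,1)`. -/
theorem statement19 (p n : ℕ) [NeZero p] (hp : p.Prime) (ℓ : ℕ) (kk mm : Fin ℓ → ℕ)
    (L : ∀ i, Fin (mm i) → Fin (kk i) → ZMod p)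
    (hinj : ∀ i, Function.Injective (L i))
    (hnz : ∀ i j, L i j ≠ 0)
    (f : (Fin n → ZMod p) → ℝ) (hf : ∀ x, f x ∈ Set.Ioo (0 : ℝ) 1)
    (hind : LinearIndependent ℝ (fun i : Fin ℓ => partialLR p n (kk i) (mm i) (L i) f)) :
    ∃ ε : ℝ, 0 < ε ∧ ∀ z : Fin ℓ → ℝ, ‖z‖ ≤ ε →
      ∃ g : (Fin n → ZMod p) → ℝ, (∀ x, g x ∈ Set.Ioo (0 : ℝ) 1) ∧
        (fun i => tLR p n (kk i) (mm i) (L i) f + z i) =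
        (fun i => tLR p n (kk i) (mm i) (L i) g) := by
  classical
  haveI := Fact.mk hp
  set Φ : ((Fin n → ZMod p) → ℝ) → (Fin ℓ → ℝ) :=
    fun g i => tLR p n (kk i) (mm i) (L i) g with hΦ
  set D' : ∀ _ : Fin ℓ, ((Fin n → ZMod p) → ℝ) →L[ℝ] ℝ := fun i =>
    (Fintype.card (Fin (kk i) → Fin n → ZMod p) : ℝ)⁻¹ •
      ∑ X : Fin (kk i) → Fin n → ZMod p, ∑ j : Fin (mm i),
        (∏ j' ∈ Finset.univ.erase j, f (applyLF p n (kk i) (L i j') X)) •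
          (ContinuousLinearMap.proj (R := ℝ) (φ := fun _ : Fin n → ZMod p => ℝ)
            (applyLF p n (kk i) (L i j) X)) with hD'
  set D : ((Fin n → ZMod p) → ℝ) →L[ℝ] (Fin ℓ → ℝ) := ContinuousLinearMap.pi D' with hD
  have hDapp : ∀ (h : (Fin n → ZMod p) → ℝ) (i : Fin ℓ),
      D h i = expR (fun x => h x * partialLR p n (kk i) (mm i) (L i) f x) := by
    intro h i
    have h1 : D h i = (Fintype.card (Fin (kk i) → Fin n → ZMod p) : ℝ)⁻¹ *
        ∑ X : Fin (kk i) → Fin n → ZMod p, ∑ j : Fin (mm i),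
          (∏ j' ∈ Finset.univ.erase j, f (applyLF p n (kk i) (L i j') X)) *
            h (applyLF p n (kk i) (L i j) X) := by
      simp [hD, hD', ContinuousLinearMap.pi_apply, ContinuousLinearMap.sum_apply,
        ContinuousLinearMap.smul_apply, ContinuousLinearMap.proj_apply, smul_eq_mul]
    rw [h1]
    exact key_identity hp (L i) (hnz i) f h
  have hderiv : HasStrictFDerivAt Φ D f := by
    rw [hD]
    apply hasStrictFDerivAt_pi.mpr
    intro i
    have h1 : HasStrictFDerivAt
        (fun g : (Fin n → ZMod p) → ℝ => ∑ X : Fin (kk i) → Fin n → ZMod p,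
          ∏ j : Fin (mm i), g (applyLF p n (kk i) (L i j) X))
        (∑ X : Fin (kk i) → Fin n → ZMod p, ∑ j : Fin (mm i),
          (∏ j' ∈ Finset.univ.erase j, f (applyLF p n (kk i) (L i j') X)) •
            (ContinuousLinearMap.proj (R := ℝ) (φ := fun _ : Fin n → ZMod p => ℝ)
              (applyLF p n (kk i) (L i j) X))) f :=
      HasStrictFDerivAt.fun_sum fun X _ =>
        HasStrictFDerivAt.finset_prod
          (g := fun j (g : (Fin n → ZMod p) → ℝ) => g (applyLF p n (kk i) (L i j) X))
          (g' := fun j => ContinuousLinearMap.proj (R := ℝ) (φ := fun _ : Fin n → ZMod p => ℝ)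
            (applyLF p n (kk i) (L i j) X)) fun j _ =>
          (ContinuousLinearMap.proj (R := ℝ) (φ := fun _ : Fin n → ZMod p => ℝ)
            (applyLF p n (kk i) (L i j) X)).hasStrictFDerivAt
    have h2 := h1.const_smul ((Fintype.card (Fin (kk i) → Fin n → ZMod p) : ℝ))⁻¹
    have heq : (fun g : (Fin n → ZMod p) → ℝ => tLR p n (kk i) (mm i) (L i) g)
        = fun g : (Fin n → ZMod p) → ℝ =>
          (Fintype.card (Fin (kk i) → Fin n → ZMod p) : ℝ)⁻¹ •
            ∑ X : Fin (kk i) → Fin n → ZMod p,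
              ∏ j : Fin (mm i), g (applyLF p n (kk i) (L i j) X) := by
      funext g
      simp [tLR, expR, div_eq_inv_mul, smul_eq_mul]
    show HasStrictFDerivAt (fun g : (Fin n → ZMod p) → ℝ => tLR p n (kk i) (mm i) (L i) g)
      (D' i) f
    rw [heq, hD']
    exact h2
  have hrange : LinearMap.range (D : ((Fin n → ZMod p) → ℝ) →ₗ[ℝ] (Fin ℓ → ℝ)) = ⊤ := by
    rw [LinearMap.range_eq_top]
    intro y
    obtain ⟨h, hh⟩ := statement19_surj_aux
      (fun i : Fin ℓ => partialLR p n (kk i) (mm i) (L i) f) hind y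
    exact ⟨h, funext fun i => (hDapp h i).trans (hh i)⟩
  have hmap : Filter.map Φ (𝓝 f) = 𝓝 (Φ f) := hderiv.map_nhds_eq_of_surj hrange
  have hUopen : IsOpen {g : (Fin n → ZMod p) → ℝ | ∀ x, g x ∈ Set.Ioo (0 : ℝ) 1} := by
    have heq : {g : (Fin n → ZMod p) → ℝ | ∀ x, g x ∈ Set.Ioo (0 : ℝ) 1}
        = ⋂ x : Fin n → ZMod p,
          (fun g : (Fin n → ZMod p) → ℝ => g x) ⁻¹' Set.Ioo (0 : ℝ) 1 := by
      ext g; simp [Set.mem_iInter]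
    rw [heq]
    exact isOpen_iInter_of_finite fun x => isOpen_Ioo.preimage (continuous_apply x)
  have hU : {g : (Fin n → ZMod p) → ℝ | ∀ x, g x ∈ Set.Ioo (0 : ℝ) 1} ∈ 𝓝 f :=
    hUopen.mem_nhds hf
  have himg : Φ '' {g : (Fin n → ZMod p) → ℝ | ∀ x, g x ∈ Set.Ioo (0 : ℝ) 1} ∈ 𝓝 (Φ f) := by
    rw [← hmap]
    exact Filter.image_mem_map hU
  obtain ⟨ε, hε, hball⟩ := Metric.mem_nhds_iff.mp himg
  refine ⟨ε / 2, by positivity, fun z hz => ?_⟩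
  have hin : Φ f + z ∈ Metric.ball (Φ f) ε := by
    rw [Metric.mem_ball, dist_eq_norm, add_sub_cancel_left]
    exact lt_of_le_of_lt hz (half_lt_self hε)
  obtain ⟨g, hgU, hgΦ⟩ := hball hin
  refine ⟨g, hgU, ?_⟩
  funext i
  have := congrFun hgΦ i
  simp only [hΦ, Pi.add_apply] at this
  exact this.symm

end Paper
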